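/- The stabilizer group of the subsystem toric code on the L×L torus, generated by the 2L² operators {S^X_p, S^Z_p}, has exactly 2(L²−1) independent generators; consequently the stabilizer code encodes k' = 3L² − 2(L²−1) = L² + 2 qubits. -/

import Mathlib

/-- Qubits of the subsystem toric code on the `L × L` torus:
`(0,x,y)` is the vertex at `(x,y)`, `(1,x,y)` is the horizontal edge from `(x,y)` to `(x+1,y)`,
and `(2,x,y)` is the vertical edge from `(x,y)` to `(x,y+1)`. -/
abbrev Q (L : ℕ) := Fin 3 × ZMod L × ZMod L

/-- Support of the weight-6 X-type stabilizer of plaquette `p` (product of SW and NE triangles). -/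
def SXsup (L : ℕ) (p : ZMod L × ZMod L) : Finset (Q L) :=
  {(0, p.1, p.2), (0, p.1 + 1, p.2 + 1), (1, p.1, p.2), (1, p.1, p.2 + 1),
   (2, p.1, p.2), (2, p.1 + 1, p.2)}

/-- Support of the weight-6 Z-type stabilizer of plaquette `p` (product of SE and NW triangles). -/
def SZsup (L : ℕ) (p : ZMod L × ZMod L) : Finset (Q L) :=
  {(0, p.1 + 1, p.2), (0, p.1, p.2 + 1), (1, p.1, p.2), (1, p.1, p.2 + 1),
   (2, p.1, p.2), (2, p.1 + 1, p.2)}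

/-- SW (X-type) triangle of plaquette `p`. -/
def TSW (L : ℕ) (p : ZMod L × ZMod L) : Finset (Q L) :=
  {(0, p.1, p.2), (1, p.1, p.2), (2, p.1, p.2)}

/-- NE (X-type) triangle of plaquette `p`. -/
def TNE (L : ℕ) (p : ZMod L × ZMod L) : Finset (Q L) :=
  {(0, p.1 + 1, p.2 + 1), (1, p.1, p.2 + 1), (2, p.1 + 1, p.2)}

/-- SE (Z-type) triangle of plaquette `p`. -/
def TSE (L : ℕ) (p : ZMod L × ZMod L) : Finset (Q L) :=
  {(0, p.1 + 1, p.2), (1, p.1, p.2), (2, p.1 + 1, p.2)}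

/-- NW (Z-type) triangle of plaquette `p`. -/
def TNW (L : ℕ) (p : ZMod L × ZMod L) : Finset (Q L) :=
  {(0, p.1, p.2 + 1), (1, p.1, p.2 + 1), (2, p.1, p.2)}

/-- The horizontal line `Γ` at height `y₀`: all vertices and horizontal edges with `y = y₀`. -/
def Gam (L : ℕ) [NeZero L] (y₀ : ZMod L) : Finset (Q L) :=
  Finset.univ.filter fun q => (q.1 = 0 ∨ q.1 = 1) ∧ q.2.2 = y₀

/-- The vertical line `Λ` at horizontal position `x₀`: all vertices and vertical edges with `x = x₀`. -/
def Lam (L : ℕ) [NeZero L] (x₀ : ZMod L) : Finset (Q L) :=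
  Finset.univ.filter fun q => (q.1 = 0 ∨ q.1 = 2) ∧ q.2.1 = x₀

/-- `F₂`-indicator vector of a finite set. -/
def ind {α : Type*} [DecidableEq α] (S : Finset α) : α → ZMod 2 :=
  fun i => if i ∈ S then 1 else 0

/-- The symplectic `F₂`-vector of an X-type Pauli operator with support `S`. -/
def xVec (L : ℕ) (S : Finset (Q L)) : (Q L → ZMod 2) × (Q L → ZMod 2) := (ind S, 0)

/-- The symplectic `F₂`-vector of a Z-type Pauli operator with support `S`. -/
def zVec (L : ℕ) (S : Finset (Q L)) : (Q L → ZMod 2) × (Q L → ZMod 2) := (0, ind S)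

open Finset Submodule LinearMap

section Aux

variable {L : ℕ} [NeZero L]

-- membership characterizations
lemma memX0 (x y : ZMod L) (p : ZMod L × ZMod L) :
    (0, x, y) ∈ SXsup L p ↔ p = (x, y) ∨ p = (x - 1, y - 1) := by
  simp [SXsup, Prod.ext_iff, eq_sub_iff_add_eq]
  constructor
  · rintro (⟨h1,h2⟩|⟨h1,h2⟩) <;> [left; right] <;> exact ⟨h1.symm, h2.symm⟩
  · rintro (⟨h1,h2⟩|⟨h1,h2⟩) <;> [left; right] <;> exact ⟨h1.symm, h2.symm⟩

lemma memX1 (x y : ZMod L) (p : ZMod L × ZMod L) :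
    (1, x, y) ∈ SXsup L p ↔ p = (x, y) ∨ p = (x, y - 1) := by
  simp [SXsup, Prod.ext_iff, eq_sub_iff_add_eq]
  constructor
  · rintro (⟨h1,h2⟩|⟨h1,h2⟩) <;> [left; right] <;> exact ⟨h1.symm, h2.symm⟩
  · rintro (⟨h1,h2⟩|⟨h1,h2⟩) <;> [left; right] <;> exact ⟨h1.symm, h2.symm⟩

lemma memX2 (x y : ZMod L) (p : ZMod L × ZMod L) :
    (2, x, y) ∈ SXsup L p ↔ p = (x, y) ∨ p = (x - 1, y) := by
  simp [SXsup, Prod.ext_iff, eq_sub_iff_add_eq]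
  constructor
  · rintro (⟨h1,h2⟩|⟨h1,h2⟩) <;> [left; right] <;> exact ⟨h1.symm, h2.symm⟩
  · rintro (⟨h1,h2⟩|⟨h1,h2⟩) <;> [left; right] <;> exact ⟨h1.symm, h2.symm⟩

lemma memZ0 (x y : ZMod L) (p : ZMod L × ZMod L) :
    (0, x, y) ∈ SZsup L p ↔ p = (x - 1, y) ∨ p = (x, y - 1) := by
  simp [SZsup, Prod.ext_iff, eq_sub_iff_add_eq]
  constructor
  · rintro (⟨h1,h2⟩|⟨h1,h2⟩) <;> [left; right] <;> exact ⟨h1.symm, h2.symm⟩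
  · rintro (⟨h1,h2⟩|⟨h1,h2⟩) <;> [left; right] <;> exact ⟨h1.symm, h2.symm⟩

lemma memZ1 (x y : ZMod L) (p : ZMod L × ZMod L) :
    (1, x, y) ∈ SZsup L p ↔ p = (x, y) ∨ p = (x, y - 1) := by
  simp [SZsup, Prod.ext_iff, eq_sub_iff_add_eq]
  constructor
  · rintro (⟨h1,h2⟩|⟨h1,h2⟩) <;> [left; right] <;> exact ⟨h1.symm, h2.symm⟩
  · rintro (⟨h1,h2⟩|⟨h1,h2⟩) <;> [left; right] <;> exact ⟨h1.symm, h2.symm⟩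

lemma memZ2 (x y : ZMod L) (p : ZMod L × ZMod L) :
    (2, x, y) ∈ SZsup L p ↔ p = (x, y) ∨ p = (x - 1, y) := by
  simp [SZsup, Prod.ext_iff, eq_sub_iff_add_eq]
  constructor
  · rintro (⟨h1,h2⟩|⟨h1,h2⟩) <;> [left; right] <;> exact ⟨h1.symm, h2.symm⟩
  · rintro (⟨h1,h2⟩|⟨h1,h2⟩) <;> [left; right] <;> exact ⟨h1.symm, h2.symm⟩

lemma sum_ite_pair {α : Type*} [Fintype α] [DecidableEq α] {P : α → Prop} [DecidablePred P]
    (c : α → ZMod 2) {a b : α} (hab : a ≠ b) (h : ∀ x, P x ↔ x = a ∨ x = b) :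
    (∑ x, if P x then c x else 0) = c a + c b := by
  rw [← Finset.sum_filter]
  have : Finset.univ.filter P = {a, b} := by
    ext x; simp [h]
  rw [this, Finset.sum_pair hab]

-- constancy from shift invariance
lemma const_of_shifts (c : ZMod L × ZMod L → ZMod 2)
    (h1 : ∀ x y : ZMod L, c (x, y) = c (x - 1, y))
    (h2 : ∀ x y : ZMod L, c (x, y) = c (x, y - 1)) (x y : ZMod L) :
    c (x, y) = c (0, 0) := by
  have H1 : ∀ (n : ℕ) (y : ZMod L), c ((n : ZMod L), y) = c (0, y) := by
    intro n
    induction n with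
    | zero => simp
    | succ k ih =>
      intro y
      have := h1 ((k : ZMod L) + 1) y
      push_cast
      rw [this, add_sub_cancel_right, ih]
  have H2 : ∀ (m : ℕ) (x : ZMod L), c (x, (m : ZMod L)) = c (x, 0) := by
    intro m
    induction m with
    | zero => simp
    | succ k ih =>
      intro x
      have := h2 x ((k : ZMod L) + 1)
      push_cast
      rw [this, add_sub_cancel_right, ih]
  obtain ⟨n, rfl⟩ := ZMod.natCast_zmod_surjective x
  obtain ⟨m, rfl⟩ := ZMod.natCast_zmod_surjective y
  rw [H1, H2]

lemma zmod2_add_eq_zero {a b : ZMod 2} (h : a + b = 0) : a = b := by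
  revert h; revert a b; decide

-- the generic rank lemma
lemma rank_span_ind (hL : 2 ≤ L) (S : ZMod L × ZMod L → Finset (Q L))
    (hm1 : ∀ (x y : ZMod L) (p : ZMod L × ZMod L),
      (1, x, y) ∈ S p ↔ p = (x, y) ∨ p = (x, y - 1))
    (hm2 : ∀ (x y : ZMod L) (p : ZMod L × ZMod L),
      (2, x, y) ∈ S p ↔ p = (x, y) ∨ p = (x - 1, y))
    (hm0 : ∀ (x y : ZMod L), ∃ a b : ZMod L × ZMod L, a ≠ b ∧
      ∀ p, (0, x, y) ∈ S p ↔ p = a ∨ p = b) :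
    Module.finrank (ZMod 2)
      (span (ZMod 2) (Set.range fun p : ZMod L × ZMod L => ind (S p))) = L ^ 2 - 1 := by
  haveI : Fact (1 < L) := ⟨hL⟩
  have hone : (1 : ZMod L) ≠ 0 := one_ne_zero
  have hyne : ∀ y : ZMod L, y ≠ y - 1 := by
    intro y h
    have h2 := congrArg (fun z => y - z) h
    simp only [sub_self, sub_sub_cancel] at h2
    exact hone h2.symm
  have hxyne : ∀ x y : ZMod L, (x, y) ≠ (x, y - 1) := by
    intro x y h; exact hyne y (congrArg Prod.snd h)
  have hxyne' : ∀ x y : ZMod L, (x, y) ≠ (x - 1, y) := by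
    intro x y h; exact hyne x (congrArg Prod.fst h)
  set T := Fintype.linearCombination (ZMod 2) (fun p : ZMod L × ZMod L => ind (S p))
    with hT
  have happ : ∀ (c : ZMod L × ZMod L → ZMod 2) (q : Q L),
      T c q = ∑ p : ZMod L × ZMod L, if q ∈ S p then c p else 0 := by
    intro c q
    rw [hT, Fintype.linearCombination_apply]
    rw [Finset.sum_apply]
    congr 1; ext p
    simp [ind, smul_eq_mul, mul_ite]
  -- kernel is the span of the all-ones vector
  have hker : LinearMap.ker T = span (ZMod 2) {(fun _ => 1 : ZMod L × ZMod L → ZMod 2)} := by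
    apply le_antisymm
    · intro c hc
      have hc0 : ∀ q, T c q = 0 := fun q => by
        rw [LinearMap.mem_ker.mp hc]; rfl
      have e1 : ∀ x y : ZMod L, c (x, y) = c (x, y - 1) := by
        intro x y
        have := hc0 (1, x, y)
        rw [happ, sum_ite_pair c (hxyne x y) (hm1 x y)] at this
        exact zmod2_add_eq_zero this
      have e2 : ∀ x y : ZMod L, c (x, y) = c (x - 1, y) := by
        intro x y
        have := hc0 (2, x, y)
        rw [happ, sum_ite_pair c (hxyne' x y) (hm2 x y)] at this
        exact zmod2_add_eq_zero this
      have hconst : ∀ x y : ZMod L, c (x, y) = c (0, 0) :=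
        const_of_shifts c e2 e1
      rw [Submodule.mem_span_singleton]
      refine ⟨c (0, 0), ?_⟩
      funext p
      obtain ⟨x, y⟩ := p
      simp [hconst x y, smul_eq_mul]
    · rw [Submodule.span_le, Set.singleton_subset_iff]
      refine LinearMap.mem_ker.mpr ?_
      funext q
      obtain ⟨t, x, y⟩ := q
      have H0 : T (fun _ => 1) ((0 : Fin 3), x, y) = 0 := by
        rw [happ]
        obtain ⟨a, b, hab, hiff⟩ := hm0 x y
        rw [sum_ite_pair (fun _ => (1 : ZMod 2)) hab hiff]; decide
      have H1 : T (fun _ => 1) ((1 : Fin 3), x, y) = 0 := by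
        rw [happ, sum_ite_pair (fun _ => (1 : ZMod 2)) (hxyne x y) (hm1 x y)]; decide
      have H2 : T (fun _ => 1) ((2 : Fin 3), x, y) = 0 := by
        rw [happ, sum_ite_pair (fun _ => (1 : ZMod 2)) (hxyne' x y) (hm2 x y)]; decide
      fin_cases t
      · exact H0
      · exact H1
      · exact H2
  have hrange : LinearMap.range T = span (ZMod 2) (Set.range fun p => ind (S p)) :=
    Fintype.range_linearCombination (ZMod 2) (fun p : ZMod L × ZMod L => ind (S p))
  have hrn := LinearMap.finrank_range_add_finrank_ker T
  rw [hker, hrange] at hrn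
  have hkr : Module.finrank (ZMod 2)
      (span (ZMod 2) {(fun _ => 1 : ZMod L × ZMod L → ZMod 2)}) = 1 := by
    apply finrank_span_singleton
    intro h
    have := congrFun h (0, 0)
    simp at this
  have hdom : Module.finrank (ZMod 2) (ZMod L × ZMod L → ZMod 2) = L * L := by
    rw [Module.finrank_fintype_fun_eq_card, Fintype.card_prod, ZMod.card]
  rw [hkr, hdom] at hrn
  have : 1 ≤ L * L := Nat.one_le_iff_ne_zero.mpr (by positivity)
  have hp : L ^ 2 = L * L := sq L
  omega

-- product of submodules: finrank
lemma finrank_prod_submodule {K V W : Type*} [Field K] [AddCommGroup V] [Module K V]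
    [AddCommGroup W] [Module K W] [FiniteDimensional K V] [FiniteDimensional K W]
    (A : Submodule K V) (B : Submodule K W) :
    Module.finrank K (A.prod B) = Module.finrank K A + Module.finrank K B := by
  have e : (A.prod B) ≃ₗ[K] A × B :=
    { toFun := fun x => (⟨x.val.1, x.prop.1⟩, ⟨x.val.2, x.prop.2⟩)
      invFun := fun x => ⟨(x.1.val, x.2.val), ⟨x.1.prop, x.2.prop⟩⟩
      left_inv := fun x => rfl
      right_inv := fun x => rfl
      map_add' := fun x y => rfl
      map_smul' := fun r x => rfl }
  rw [LinearEquiv.finrank_eq e, Module.finrank_prod]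

end Aux


/-- the stabilizer group of the subsystem toric code on the `L × L` torus
(`L ≥ 2`), generated by the `2L²` operators `S^X_p, S^Z_p`, has exactly `2(L² − 1)` independent
generators (the `F₂`-span of their symplectic vectors has dimension `2(L²−1)`); consequently the
stabilizer code on `n = 3L²` qubits encodes `k' = 3L² − 2(L²−1) = L² + 2` qubits. -/
theorem stabilizer_group_rank (L : ℕ) [NeZero L] (hL : 2 ≤ L) :
    Module.finrank (ZMod 2) (Submodule.span (ZMod 2)
        ((Set.range fun p : ZMod L × ZMod L => xVec L (SXsup L p)) ∪
         (Set.range fun p : ZMod L × ZMod L => zVec L (SZsup L p)))) = 2 * (L ^ 2 - 1) ∧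
    3 * L ^ 2 - 2 * (L ^ 2 - 1) = L ^ 2 + 2 := by
  haveI : Fact (1 < L) := ⟨hL⟩
  constructor
  · have hx : (Set.range fun p : ZMod L × ZMod L => xVec L (SXsup L p)) =
        LinearMap.inl (ZMod 2) (Q L → ZMod 2) (Q L → ZMod 2) ''
          (Set.range fun p => ind (SXsup L p)) := by
      rw [← Set.range_comp]; rfl
    have hz : (Set.range fun p : ZMod L × ZMod L => zVec L (SZsup L p)) =
        LinearMap.inr (ZMod 2) (Q L → ZMod 2) (Q L → ZMod 2) ''
          (Set.range fun p => ind (SZsup L p)) := by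
      rw [← Set.range_comp]; rfl
    rw [hx, hz, LinearMap.span_inl_union_inr, finrank_prod_submodule]
    have hX := rank_span_ind hL (SXsup L) memX1 memX2 (fun x y =>
      ⟨(x, y), (x - 1, y - 1), ?_, memX0 x y⟩)
    have hZ := rank_span_ind hL (SZsup L) memZ1 memZ2 (fun x y =>
      ⟨(x - 1, y), (x, y - 1), ?_, memZ0 x y⟩)
    · rw [hX, hZ]; ring
    · intro h
      have h1 := congrArg Prod.fst h
      simp only at h1
      have h2 := congrArg (fun z => x - z) h1
      simp only [sub_self, sub_sub_cancel] at h2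
      exact one_ne_zero (α := ZMod L) h2
    · intro h
      have h1 := congrArg Prod.fst h
      simp only at h1
      have h2 := congrArg (fun z => z - x) h1
      simp only [sub_self, sub_sub_cancel_left] at h2
      exact one_ne_zero (α := ZMod L) (by simpa using h2.symm)
  · have h1 : 1 ≤ L ^ 2 := Nat.one_le_iff_ne_zero.mpr (by positivity)
    omega
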